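/- If w = [w'; φ, γ] is an ordinary augmentation of a valuation w' on K(X), then Φ(w', w) = [φ]_{w'}, the set of key polynomials for w' that are w'-equivalent to φ. -/

import Mathlib

namespace MLV

open Polynomial

/-- An additive valuation on a commutative ring `R` with values in `Γ ∪ {∞}`
(written additively, with the `min` convention), thought of as the restriction
to `R` of a valuation on its fraction field. -/
structure ValOn (R : Type*) [CommRing R] (Γ : Type*) [AddCommGroup Γ] [LinearOrder Γ] [IsOrderedAddMonoid Γ] where
  toFun : R → WithTop Γ
  map_zero' : toFun 0 = ⊤
  ne_top' : ∀ f : R, f ≠ 0 → toFun f ≠ ⊤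
  map_mul' : ∀ f g : R, toFun (f * g) = toFun f + toFun g
  add_min' : ∀ f g : R, min (toFun f) (toFun g) ≤ toFun (f + g)

variable {K : Type*} [Field K] {Γ : Type*} [AddCommGroup Γ] [LinearOrder Γ] [IsOrderedAddMonoid Γ]

/-- `w` (a valuation on `K(X)`, restricted to `K[X]`) extends the valuation `v` of `K`. -/
def Extends (w : ValOn (Polynomial K) Γ) (v : ValOn K Γ) : Prop :=
  ∀ c : K, w.toFun (C c) = v.toFun c

/-- `wbar` (a valuation on `K̄(X)`) is a common extension of `w` and of `vbar`. -/
def IsCommonExt {L : Type*} [Field L] [Algebra K L]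
    (wbar : ValOn (Polynomial L) Γ) (w : ValOn (Polynomial K) Γ) (vbar : ValOn L Γ) : Prop :=
  (∀ f : Polynomial K, wbar.toFun (f.map (algebraMap K L)) = w.toFun f) ∧
  (∀ c : L, wbar.toFun (C c) = vbar.toFun c)

/-- `δ(f) = max { w̄(X - α) : α ∈ K̄, f(α) = 0 }` (as an element of `WithBot (WithTop Γ)`,
the value `⊥` corresponding to a polynomial without roots). -/
noncomputable def delta {L : Type*} [Field L] [Algebra K L]
    (wbar : ValOn (Polynomial L) Γ) (f : Polynomial K) : WithBot (WithTop Γ) :=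
  (((f.map (algebraMap K L)).roots).map
    fun α => ((wbar.toFun (X - C α) : WithTop Γ) : WithBot (WithTop Γ))).sup

/-- `Q` is an abstract key polynomial for `w` (with respect to the common extension `wbar`
computing `δ`): `Q` is monic and `δ(f) < δ(Q)` for every nonzero `f` with `deg f < deg Q`. -/
def IsABKP {L : Type*} [Field L] [Algebra K L]
    (wbar : ValOn (Polynomial L) Γ) (Q : Polynomial K) : Prop :=
  Q.Monic ∧ ∀ f : Polynomial K, f ≠ 0 → f.degree < Q.degree → delta wbar f < delta wbar Q

/-- The `Q`-truncation `w_Q` of `w`: on the `Q`-expansion `f = ∑ fᵢ Qⁱ` it equals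
`min_i w(fᵢ Qⁱ)`. -/
noncomputable def truncVal (w : ValOn (Polynomial K) Γ) (Q f : Polynomial K) : WithTop Γ :=
  (Finset.range (f.natDegree + 1)).inf fun i => w.toFun ((f /ₘ Q ^ i) %ₘ Q * Q ^ i)

/-- `f ∼_u g` : `u(f - g) > u f = u g`. -/
def EquivMod (u : Polynomial K → WithTop Γ) (f g : Polynomial K) : Prop :=
  u f < u (f - g) ∧ u f = u g

/-- `f ∣_u g` : `g ∼_u f h` for some `h`. -/
def DvdMod (u : Polynomial K → WithTop Γ) (f g : Polynomial K) : Prop :=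
  ∃ h : Polynomial K, EquivMod u g (f * h)

/-- A key polynomial for `u`: monic, `u`-irreducible and `u`-minimal. -/
def IsKeyPol (u : Polynomial K → WithTop Γ) (φ : Polynomial K) : Prop :=
  φ.Monic ∧
  (∀ h q : Polynomial K, DvdMod u φ (h * q) → DvdMod u φ h ∨ DvdMod u φ q) ∧
  (∀ h : Polynomial K, h ≠ 0 → DvdMod u φ h → φ.degree ≤ h.degree)

/-- A key polynomial for `u` of minimal degree (i.e. of degree `deg(u)`). -/
def IsMinKeyPol (u : Polynomial K → WithTop Γ) (φ : Polynomial K) : Prop :=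
  IsKeyPol u φ ∧ ∀ ψ : Polynomial K, IsKeyPol u ψ → φ.degree ≤ ψ.degree

/-- `u ≤ u'` pointwise on `K[X]`. -/
def FnLe (u u' : Polynomial K → WithTop Γ) : Prop :=
  ∀ f : Polynomial K, u f ≤ u' f

/-- `u < u'` : `u ≤ u'` and `u f < u' f` for some `f`. -/
def FnLt (u u' : Polynomial K → WithTop Γ) : Prop :=
  FnLe u u' ∧ ∃ f : Polynomial K, u f < u' f

/-- `g ∈ Φ(u, u')` : `g` is monic of minimal degree with `u g < u' g`. -/
def InPhi (u u' : Polynomial K → WithTop Γ) (g : Polynomial K) : Prop :=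
  g.Monic ∧ u g < u' g ∧
  ∀ h : Polynomial K, h.Monic → u h < u' h → g.degree ≤ h.degree

/-- The value at `f` of the augmented valuation `[u; φ, γ]`, computed via the
`φ`-expansion `f = ∑ fᵢ φⁱ` as `min_i (u fᵢ + i γ)`. -/
noncomputable def augVal (u : Polynomial K → WithTop Γ) (φ : Polynomial K) (γ : Γ)
    (f : Polynomial K) : WithTop Γ :=
  (Finset.range (f.natDegree + 1)).inf
    fun i => u ((f /ₘ φ ^ i) %ₘ φ) + i • ((γ : WithTop Γ))

/-- `u' = [u; φ, γ]` is the ordinary augmentation of `u` at the key polynomial `φ`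
with value `γ > u φ`. -/
def IsOrdAug (u : Polynomial K → WithTop Γ) (φ : Polynomial K) (γ : Γ)
    (u' : Polynomial K → WithTop Γ) : Prop :=
  IsKeyPol u φ ∧ u φ < (γ : WithTop Γ) ∧ ∀ f : Polynomial K, u' f = augVal u φ γ f

/-- A continuous family of augmentations `(ρ_i = [w'; χ_i, γ_i])_{i ∈ ι}` of `w'`. -/
structure ContFamily (w' : ValOn (Polynomial K) Γ) (ι : Type*) [LinearOrder ι] where
  chi : ι → Polynomial K
  gam : ι → Γ
  rho : ι → ValOn (Polynomial K) Γ
  no_last : ∀ i : ι, ∃ j : ι, i < j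
  gam_mono : StrictMono gam
  aug : ∀ i : ι, IsOrdAug w'.toFun (chi i) (gam i) (rho i).toFun
  deg_eq : ∀ i j : ι, (chi i).degree = (chi j).degree
  key_step : ∀ i j : ι, i < j → IsKeyPol (rho i).toFun (chi j)
  not_equiv : ∀ i j : ι, i < j → ¬ EquivMod (rho i).toFun (chi j) (chi i)
  step : ∀ i j : ι, i < j → IsOrdAug (rho i).toFun (chi j) (gam j) (rho j).toFun

/-- `f` is `W`-stable with stable value `c`. -/
def StableAt {w' : ValOn (Polynomial K) Γ} {ι : Type*} [LinearOrder ι]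
    (F : ContFamily w' ι) (f : Polynomial K) (c : WithTop Γ) : Prop :=
  ∃ i0 : ι, ∀ i : ι, i0 ≤ i → (F.rho i).toFun f = c

/-- `f` is `W`-stable. -/
def IsStable {w' : ValOn (Polynomial K) Γ} {ι : Type*} [LinearOrder ι]
    (F : ContFamily w' ι) (f : Polynomial K) : Prop :=
  ∃ c : WithTop Γ, StableAt F f c

/-- The valuation `w` is the stable limit of the family `F`. -/
def IsStableLimit {w' : ValOn (Polynomial K) Γ} {ι : Type*} [LinearOrder ι]
    (F : ContFamily w' ι) (w : ValOn (Polynomial K) Γ) : Prop :=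
  ∀ f : Polynomial K, StableAt F f (w.toFun f)

/-- `Q` is a MacLane–Vaquié limit key polynomial for `F`: monic, `F`-unstable,
of minimal degree among unstable polynomials. -/
def IsLimitKP {w' : ValOn (Polynomial K) Γ} {ι : Type*} [LinearOrder ι]
    (F : ContFamily w' ι) (Q : Polynomial K) : Prop :=
  Q.Monic ∧ ¬ IsStable F Q ∧ ∀ g : Polynomial K, ¬ IsStable F g → Q.degree ≤ g.degree

/-- The continuous family `F` is essential: `deg(W) < m_∞ < ∞`. -/
def IsEssential {w' : ValOn (Polynomial K) Γ} {ι : Type*} [LinearOrder ι]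
    (F : ContFamily w' ι) : Prop :=
  (∃ f : Polynomial K, ¬ IsStable F f) ∧
  ∀ (i : ι) (f : Polynomial K), ¬ IsStable F f → (F.chi i).degree < f.degree

/-- `w = [F; Q, γ]` is the limit augmentation of the family `F` at the limit key
polynomial `Q` with value `γ`: on `Q`-expansions, `w f = min_i (ρ_W(fᵢ) + iγ)`, which
since the coefficients are stable is the eventual value of `[ρ_i; Q, γ]` on `f`. -/
def IsLimitAug {w' : ValOn (Polynomial K) Γ} {ι : Type*} [LinearOrder ι]
    (F : ContFamily w' ι) (Q : Polynomial K) (γ : Γ)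
    (w : ValOn (Polynomial K) Γ) : Prop :=
  IsLimitKP F Q ∧ (∀ i : ι, (F.rho i).toFun Q < (γ : WithTop Γ)) ∧
  ∀ f : Polynomial K, ∃ i0 : ι, ∀ i : ι, i0 ≤ i → w.toFun f = augVal (F.rho i).toFun Q γ f

/-- `w` is a depth-zero valuation `w_{α,δ}` over `v`. -/
def IsDepthZero (v : ValOn K Γ) (w : ValOn (Polynomial K) Γ) : Prop :=
  ∃ (α : K) (d : Γ), ∀ f : Polynomial K,
    w.toFun f = (Finset.range (f.natDegree + 1)).inf
      fun i => v.toFun (((Polynomial.taylor α) f).coeff i) + i • ((d : WithTop Γ))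

/-- An ordinary augmentation step of a MacLane–Vaquié chain:
`u' = [u; φ, γ]` with `deg(u) < deg Φ(u, u')`. -/
def OrdMLVStep (u u' : Polynomial K → WithTop Γ) (φ : Polynomial K) (γ : Γ) : Prop :=
  IsOrdAug u φ γ u' ∧
  ∀ ψ g : Polynomial K, IsMinKeyPol u ψ → InPhi u u' g → ψ.degree < g.degree

/-- A limit augmentation step of a MacLane–Vaquié chain, with the underlying essential
continuous family `F` made explicit: `w = [F; φ, γ]`, `deg(w') = deg Φ(w', w)` and
`φprev ∉ Φ(w', w)`. -/
def LimMLVStepWith {w' : ValOn (Polynomial K) Γ} {ι : Type*} [LinearOrder ι]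
    (F : ContFamily w' ι) (w : ValOn (Polynomial K) Γ)
    (φprev φ : Polynomial K) (γ : Γ) : Prop :=
  IsEssential F ∧ IsLimitAug F φ γ w ∧
  (∀ ψ g : Polynomial K, IsMinKeyPol w'.toFun ψ → InPhi w'.toFun w.toFun g →
    ψ.degree = g.degree) ∧
  ¬ InPhi w'.toFun w.toFun φprev

/-- A limit augmentation step of a MacLane–Vaquié chain (the underlying essential
continuous family being existentially quantified). -/
def LimMLVStep (w' w : ValOn (Polynomial K) Γ) (φprev φ : Polynomial K) (γ : Γ) : Prop :=
  ∃ (ι : Type) (li : LinearOrder ι) (F : @ContFamily K _ Γ _ _ _ w' ι li),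
    @LimMLVStepWith K _ Γ _ _ _ w' ι li F w φprev φ γ

/-- Membership in the index set `I`: `I = ℕ` if `o = none`, and `I = {0, …, N}`
if `o = some N`. -/
def InIdx (o : Option ℕ) (j : ℕ) : Prop :=
  ∀ N : ℕ, o = some N → j ≤ N

/-- An induced complete sequence `{Q_i}_{i ∈ Δ}` of abstract key polynomials for `w`:
a complete sequence of ABKPs, organized in blocks `Δ_j = {j} ∪ ϑ_j` (for `j` in
`I = {0,…,N}` or `I = ℕ`), satisfying the properties of Remark 1.3.  Here `blk i`
is the block of an index `i ∈ Δ`, `main j ∈ Δ` is the distinguished first element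
of the block `Δ_j`, and `ϑ_j = {i ∈ Δ | blk i = j, i ≠ main j}`. -/
structure ICS {L : Type*} [Field L] [Algebra K L]
    (wbar : ValOn (Polynomial L) Γ) (w : ValOn (Polynomial K) Γ)
    (Δ : Type*) [LinearOrder Δ] where
  Q : Δ → Polynomial K
  abkp : ∀ i : Δ, IsABKP wbar (Q i)
  wf : WellFoundedLT Δ
  delta_mono : ∀ i i' : Δ, i < i' → delta wbar (Q i) < delta wbar (Q i')
  wval_mono : ∀ i i' : Δ, i < i' → w.toFun (Q i) < w.toFun (Q i')
  complete : ∀ f : Polynomial K, f ≠ 0 →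
    ∃ i : Δ, (Q i).degree ≤ f.degree ∧ truncVal w (Q i) f = w.toFun f
  Ifin : Option ℕ
  blk : Δ → ℕ
  main : ℕ → Δ
  blk_mono : ∀ i i' : Δ, i ≤ i' → blk i ≤ blk i'
  blk_mem : ∀ i : Δ, InIdx Ifin (blk i)
  blk_main : ∀ j : ℕ, InIdx Ifin j → blk (main j) = j
  main_min : ∀ (j : ℕ) (i : Δ), blk i = j → main j ≤ i
  theta_no_last : ∀ i : Δ, i ≠ main (blk i) →
    ∃ i' : Δ, blk i' = blk i ∧ i' ≠ main (blk i) ∧ i < i'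
  deg_blk_eq : ∀ i i' : Δ, blk i = blk i' → (Q i).degree = (Q i').degree
  deg_blk_lt : ∀ i i' : Δ, blk i < blk i' → (Q i).degree < (Q i').degree
  degQ0 : (Q (main 0)).degree = 1


section Aux

variable {K : Type*} [Field K] {Γ : Type*} [AddCommGroup Γ] [LinearOrder Γ] [IsOrderedAddMonoid Γ]

lemma ValOn.one_eq (w : ValOn (Polynomial K) Γ) : w.toFun 1 = 0 := by
  have h := w.map_mul' 1 1
  rw [mul_one] at h
  obtain ⟨c, hc⟩ := WithTop.ne_top_iff_exists.mp (w.ne_top' 1 one_ne_zero)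
  rw [← hc, ← WithTop.coe_add, WithTop.coe_inj] at h
  have : c = 0 := by
    have h' : c + 0 = c + c := by rw [add_zero, ← h]
    exact (add_left_cancel h').symm
  rw [← hc, this, WithTop.coe_zero]

lemma ValOn.neg_eq (w : ValOn (Polynomial K) Γ) (f : Polynomial K) :
    w.toFun (-f) = w.toFun f := by
  have hm1 : w.toFun (-1 : Polynomial K) = 0 := by
    have h := w.map_mul' (-1) (-1)
    rw [neg_mul_neg, one_mul, w.one_eq] at h
    obtain ⟨c, hc⟩ := WithTop.ne_top_iff_exists.mp (w.ne_top' (-1) (by norm_num))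
    rw [← hc, ← WithTop.coe_add, eq_comm, WithTop.coe_eq_zero] at h
    have : c = 0 := by
      rcases lt_trichotomy c 0 with h0 | h0 | h0
      · exact absurd h (ne_of_lt (by calc c + c < 0 + 0 := add_lt_add h0 h0
          _ = 0 := add_zero 0))
      · exact h0
      · exact absurd h (ne_of_gt (by calc (0 : Γ) = 0 + 0 := (add_zero 0).symm
          _ < c + c := add_lt_add h0 h0))
    rw [← hc, this, WithTop.coe_zero]
  have : -f = (-1) * f := by ring
  rw [this, w.map_mul', hm1, zero_add]

lemma ValOn.sub_min (w : ValOn (Polynomial K) Γ) (f g : Polynomial K) :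
    min (w.toFun f) (w.toFun g) ≤ w.toFun (f - g) := by
  have := w.add_min' f (-g)
  rw [w.neg_eq g] at this
  simpa [sub_eq_add_neg] using this

lemma equivMod_symm (w : ValOn (Polynomial K) Γ) {f g : Polynomial K}
    (h : EquivMod w.toFun f g) : EquivMod w.toFun g f := by
  obtain ⟨h1, h2⟩ := h
  refine ⟨?_, h2.symm⟩
  have : w.toFun (g - f) = w.toFun (f - g) := by
    rw [← w.neg_eq (g - f)]; congr 1; ring
  rw [this, ← h2]; exact h1

lemma equivMod_trans (w : ValOn (Polynomial K) Γ) {f g h : Polynomial K}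
    (h1 : EquivMod w.toFun f g) (h2 : EquivMod w.toFun g h) : EquivMod w.toFun f h := by
  obtain ⟨ha, hb⟩ := h1
  obtain ⟨hc, hd⟩ := h2
  refine ⟨?_, hb.trans hd⟩
  have key : min (w.toFun (f - g)) (w.toFun (g - h)) ≤ w.toFun (f - h) := by
    have := w.sub_min (f - g) (-(g - h))
    rw [w.neg_eq] at this
    have e : f - g - -(g - h) = f - h := by ring
    rwa [e] at this
  calc w.toFun f < min (w.toFun (f - g)) (w.toFun (g - h)) :=
        lt_min ha (by rw [hb]; exact hc)
    _ ≤ w.toFun (f - h) := key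

lemma equivMod_mul_right (w : ValOn (Polynomial K) Γ) {f g : Polynomial K}
    (h : EquivMod w.toFun f g) (r : Polynomial K) (hr : r ≠ 0) :
    EquivMod w.toFun (f * r) (g * r) := by
  obtain ⟨h1, h2⟩ := h
  have e : f * r - g * r = (f - g) * r := by ring
  rw [EquivMod, e, w.map_mul', w.map_mul', w.map_mul']
  exact ⟨WithTop.add_lt_add_right (w.ne_top' r hr) h1, by rw [h2]⟩

lemma dvdMod_congr (w : ValOn (Polynomial K) Γ) {φ g : Polynomial K}
    (h : EquivMod w.toFun g φ) (f : Polynomial K)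
    (hd : DvdMod w.toFun φ f) : DvdMod w.toFun g f := by
  obtain ⟨r, hr⟩ := hd
  have hrne : r ≠ 0 := by
    rintro rfl
    rw [mul_zero] at hr
    obtain ⟨h1, _⟩ := hr
    rw [sub_zero] at h1
    exact lt_irrefl _ h1
  exact ⟨r, equivMod_trans w hr (equivMod_mul_right w (equivMod_symm w h) r hrne)⟩

lemma isKeyPol_of_equiv (w : ValOn (Polynomial K) Γ) {φ g : Polynomial K}
    (hφ : IsKeyPol w.toFun φ) (hg : g.Monic) (hdeg : g.degree = φ.degree)
    (h : EquivMod w.toFun g φ) : IsKeyPol w.toFun g := by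
  refine ⟨hg, ?_, ?_⟩
  · intro a b hab
    have : DvdMod w.toFun φ (a * b) :=
      dvdMod_congr w (equivMod_symm w h) _ hab
    rcases hφ.2.1 a b this with hc | hc
    · exact Or.inl (dvdMod_congr w h _ hc)
    · exact Or.inr (dvdMod_congr w h _ hc)
  · intro a hane ha
    have : DvdMod w.toFun φ a := dvdMod_congr w (equivMod_symm w h) _ ha
    rw [hdeg]
    exact hφ.2.2 a hane this

lemma augVal_of_degree_lt (w : ValOn (Polynomial K) Γ) {φ : Polynomial K} (hφ : φ.Monic)
    (γ : Γ) {f : Polynomial K} (hf : f.degree < φ.degree) :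
    augVal w.toFun φ γ f = w.toFun f := by
  have hφ0 : φ ≠ 0 := hφ.ne_zero
  apply le_antisymm
  · refine le_trans (Finset.inf_le (Finset.mem_range.mpr (Nat.succ_pos _))) ?_
    rw [pow_zero, divByMonic_one, (modByMonic_eq_self_iff hφ).mpr hf, zero_smul, add_zero]
  · refine Finset.le_inf fun i _ => ?_
    rcases Nat.eq_zero_or_pos i with h0 | h1
    · subst h0
      rw [pow_zero, divByMonic_one, (modByMonic_eq_self_iff hφ).mpr hf, zero_smul, add_zero]
    · have hdle : φ.degree ≤ (φ ^ i).degree := by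
        have : (φ ^ i).natDegree = i * φ.natDegree := hφ.natDegree_pow i
        rw [degree_eq_natDegree hφ0, degree_eq_natDegree (hφ.pow i).ne_zero, this]
        exact_mod_cast Nat.le_mul_of_pos_left _ h1
      have : f /ₘ φ ^ i = 0 := by
        rw [divByMonic_eq_zero_iff (hφ.pow i)]
        exact lt_of_lt_of_le hf hdle
      rw [this, zero_modByMonic, w.map_zero', top_add]
      exact le_top

lemma augVal_of_degree_eq (w : ValOn (Polynomial K) Γ) {φ g : Polynomial K} (hφ : φ.Monic)
    (hφd : 0 < φ.degree) (γ : Γ) (hg : g.Monic) (hdeg : g.degree = φ.degree) :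
    augVal w.toFun φ γ g = min (w.toFun (g - φ)) (γ : WithTop Γ) := by
  have hφ0 : φ ≠ 0 := hφ.ne_zero
  have hg0 : g ≠ 0 := hg.ne_zero
  have hsub : (g - φ).degree < φ.degree := by
    rw [← hdeg]
    exact degree_sub_lt hdeg hg0 (by rw [hg.leadingCoeff, hφ.leadingCoeff])
  have huniq : g /ₘ φ = 1 ∧ g %ₘ φ = g - φ :=
    div_modByMonic_unique 1 (g - φ) hφ ⟨by ring, hsub⟩
  have hnd : 0 < g.natDegree := by
    rw [natDegree_pos_iff_degree_pos, hdeg]; exact hφd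
  have hmem1 : 1 ∈ Finset.range (g.natDegree + 1) := Finset.mem_range.mpr (by omega)
  have hmem0 : 0 ∈ Finset.range (g.natDegree + 1) := Finset.mem_range.mpr (Nat.succ_pos _)
  have hterm0 : w.toFun ((g /ₘ φ ^ 0) %ₘ φ) + (0 : ℕ) • ((γ : WithTop Γ)) =
      w.toFun (g - φ) := by
    rw [pow_zero, divByMonic_one, huniq.2, zero_smul, add_zero]
  have hterm1 : w.toFun ((g /ₘ φ ^ 1) %ₘ φ) + (1 : ℕ) • ((γ : WithTop Γ)) =
      (γ : WithTop Γ) := by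
    rw [pow_one, huniq.1, (modByMonic_eq_self_iff hφ).mpr (by rw [degree_one]; exact hφd),
      w.one_eq, one_smul, zero_add]
  apply le_antisymm
  · refine le_min ?_ ?_
    · exact le_trans (Finset.inf_le hmem0) (le_of_eq hterm0)
    · exact le_trans (Finset.inf_le hmem1) (le_of_eq hterm1)
  · refine Finset.le_inf fun i _ => ?_
    match i with
    | 0 => rw [hterm0]; exact min_le_left _ _
    | 1 => rw [hterm1]; exact min_le_right _ _
    | (n + 2) =>
      have hdlt : g.degree < (φ ^ (n + 2)).degree := by
        have hnp : (φ ^ (n + 2)).natDegree = (n + 2) * φ.natDegree := hφ.natDegree_pow _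
        have hφn : 0 < φ.natDegree := natDegree_pos_iff_degree_pos.mpr hφd
        rw [hdeg, degree_eq_natDegree hφ0, degree_eq_natDegree (hφ.pow (n + 2)).ne_zero, hnp]
        exact_mod_cast by nlinarith
      have : g /ₘ φ ^ (n + 2) = 0 :=
        (divByMonic_eq_zero_iff (hφ.pow (n + 2))).mpr hdlt
      rw [this, zero_modByMonic, w.map_zero', top_add]
      exact le_top

end Aux

/-- if `w = [w'; φ, γ]` is an ordinary augmentation,
then `Φ(w', w) = [φ]_{w'}`. -/
theorem phi_of_ordinary_augmentation
    {K : Type*} [Field K] {Γ : Type*} [AddCommGroup Γ] [LinearOrder Γ] [IsOrderedAddMonoid Γ]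
    (w' w : ValOn (Polynomial K) Γ) (φ : Polynomial K) (γ : Γ)
    (haug : IsOrdAug w'.toFun φ γ w.toFun) :
    ∀ g : Polynomial K, InPhi w'.toFun w.toFun g ↔
      (IsKeyPol w'.toFun g ∧ EquivMod w'.toFun g φ) := by
  obtain ⟨hkeyφ, hγ, hw⟩ := haug
  have hφm : φ.Monic := hkeyφ.1
  -- φ has positive degree
  have hφd : 0 < φ.degree := by
    by_contra hcon
    push_neg at hcon
    have hφ1 : φ = 1 := (Monic.degree_le_zero_iff_eq_one hφm).mp hcon
    have h1 : w.toFun 1 = ⊤ := by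
      rw [hw 1, hφ1]
      unfold augVal
      rw [natDegree_one]
      simp only [Finset.range_one, Finset.inf_singleton, pow_zero, divByMonic_one,
        modByMonic_one, w'.map_zero', zero_smul, add_zero, top_add]
      simp
    exact w.ne_top' 1 one_ne_zero h1
  -- value of w at φ is γ
  have hwφ : w.toFun φ = (γ : WithTop Γ) := by
    rw [hw φ, augVal_of_degree_eq w' hφm hφd γ hφm rfl, sub_self, w'.map_zero']
    exact min_eq_right le_top
  have hφΦ : w'.toFun φ < w.toFun φ := by rw [hwφ]; exact hγ
  -- low degree polynomials have equal value
  have hlow : ∀ h : Polynomial K, h.degree < φ.degree → w.toFun h = w'.toFun h := by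
    intro h hh
    rw [hw h, augVal_of_degree_lt w' hφm γ hh]
  intro g
  constructor
  · rintro ⟨hgm, hglt, hgmin⟩
    -- degree of g equals degree of φ
    have hdle : g.degree ≤ φ.degree := hgmin φ hφm hφΦ
    have hdge : φ.degree ≤ g.degree := by
      by_contra hcon
      push_neg at hcon
      rw [hlow g hcon] at hglt
      exact lt_irrefl _ hglt
    have hdeg : g.degree = φ.degree := le_antisymm hdle hdge
    have hwg : w.toFun g = min (w'.toFun (g - φ)) (γ : WithTop Γ) := by
      rw [hw g, augVal_of_degree_eq w' hφm hφd γ hgm hdeg]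
    rw [hwg] at hglt
    have hlt1 : w'.toFun g < w'.toFun (g - φ) := lt_of_lt_of_le hglt (min_le_left _ _)
    -- w' g = w' φ
    have hge1 : w'.toFun g ≤ w'.toFun φ := by
      have := w'.sub_min g (g - φ)
      have e : g - (g - φ) = φ := by ring
      rw [e, min_le_iff] at this
      rcases this with h | h
      · exact h
      · exact hlt1.le.trans h
    have hge2 : w'.toFun φ ≤ w'.toFun g := by
      have := w'.add_min' (g - φ) φ
      have e : g - φ + φ = g := by ring
      rw [e, min_le_iff] at this
      rcases this with h | h
      · exact absurd h (not_le.mpr hlt1)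
      · exact h
    have heq : EquivMod w'.toFun g φ := ⟨hlt1, le_antisymm hge1 hge2⟩
    exact ⟨isKeyPol_of_equiv w' hkeyφ hgm hdeg heq, heq⟩
  · rintro ⟨hkeyg, heq⟩
    have hgm : g.Monic := hkeyg.1
    -- degrees are equal
    have hdge : φ.degree ≤ g.degree := by
      refine hkeyφ.2.2 g hgm.ne_zero ⟨1, ?_⟩
      rw [mul_one]; exact heq
    have hdle : g.degree ≤ φ.degree := by
      refine hkeyg.2.2 φ hφm.ne_zero ⟨1, ?_⟩
      rw [mul_one]; exact equivMod_symm w' heq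
    have hdeg : g.degree = φ.degree := le_antisymm hdle hdge
    refine ⟨hgm, ?_, ?_⟩
    · rw [hw g, augVal_of_degree_eq w' hφm hφd γ hgm hdeg]
      refine lt_min heq.1 ?_
      rw [heq.2]; exact hγ
    · intro h hhm hhlt
      rw [hdeg]
      by_contra hcon
      push_neg at hcon
      rw [hlow h hcon] at hhlt
      exact lt_irrefl _ hhlt

end MLV
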